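/- Let Ψ : {-1,1}^d → R^{m̂} be any map with ||Ψ(v)||_2 ≤ 1 for all v, and let ε > 0, B > 0 with m̂ B^2 ≤ ε^2 · C(d, r) (binomial coefficient d choose r). Then there exists a subset u ∈ {0,1}^d with ||u||_1 = r such that, for the parity label f_u(v) = (-1)^{u^T v} and v uniform on {-1,1}^d, every linear head a ∈ R^{m̂} with ||a||_2 ≤ B satisfies E_v[ max(1 - f_u(v) · a^T Ψ(v), 0) ] ≥ 1 - ε. -/

import Mathlib

open scoped RealInnerProductSpace

/-- The `(r,u)`-sparse parity label of `v ∈ {-1,1}^d` (encoded by a Boolean vector),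
where the subset `u` is encoded by a `Finset`: `f_u(v) = ∏_{i ∈ u} v_i`. -/
def parity {d : ℕ} (u : Finset (Fin d)) (v : Fin d → Bool) : ℝ :=
  ∏ i ∈ u, (if v i then 1 else -1)

lemma parity_sq {d : ℕ} (u : Finset (Fin d)) (v : Fin d → Bool) :
    parity u v * parity u v = 1 := by
  unfold parity
  rw [← Finset.prod_mul_distrib]
  apply Finset.prod_eq_one
  intro i _
  by_cases h : v i <;> simp [h]

lemma parity_mul {d : ℕ} (u w : Finset (Fin d)) (v : Fin d → Bool) :
    parity u v * parity w v = parity (symmDiff u w) v := by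
  classical
  have hu : parity u v = parity (u \ w) v * parity (u ∩ w) v := by
    unfold parity
    rw [← Finset.prod_union (Finset.disjoint_sdiff_inter u w), Finset.sdiff_union_inter]
  have hw : parity w v = parity (w \ u) v * parity (u ∩ w) v := by
    unfold parity
    rw [Finset.inter_comm, ← Finset.prod_union (Finset.disjoint_sdiff_inter w u), Finset.sdiff_union_inter]
  have hsd : parity (symmDiff u w) v = parity (u \ w) v * parity (w \ u) v := by
    unfold parity
    rw [symmDiff_def, Finset.sup_eq_union, Finset.prod_union disjoint_sdiff_sdiff]
  rw [hu, hw, hsd]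
  linear_combination (parity (u \ w) v * parity (w \ u) v) * parity_sq (u ∩ w) v

lemma sum_parity {d : ℕ} (u : Finset (Fin d)) :
    ∑ v : Fin d → Bool, parity u v = if u = ∅ then (2 ^ d : ℝ) else 0 := by
  classical
  have key : ∀ v : Fin d → Bool, parity u v =
      ∏ i : Fin d, (if i ∈ u then (if v i then (1:ℝ) else -1) else 1) := by
    intro v
    rw [parity, ← Finset.prod_filter]
    congr 1
    simp [Finset.filter_mem_eq_inter]
  simp only [key]
  rw [← Fintype.prod_sum (fun i (b : Bool) => if i ∈ u then (if b then (1:ℝ) else -1) else 1)]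
  by_cases h : u = ∅
  · simp [h]
  · rw [if_neg h]
    obtain ⟨i, hi⟩ := Finset.nonempty_iff_ne_empty.2 h
    apply Finset.prod_eq_zero (Finset.mem_univ i)
    simp [hi]

/-- Random features cannot solve all sparse parities: if `Ψ : {-1,1}^d → ℝ^m̂` has
`‖Ψ(v)‖ ≤ 1` for all `v`, and `m̂ B² ≤ ε² · C(d,r)`, then there is an `r`-subset `u`
such that every linear head `a` with `‖a‖ ≤ B` incurs expected hinge loss at least
`1 - ε` on the `(r,u)`-sparse parity task with uniform inputs. -/
theorem stmt_14 (d r : ℕ) (hr : r ≤ d) (mhat : ℕ)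
    (Ψ : (Fin d → Bool) → EuclideanSpace ℝ (Fin mhat))
    (hΨ : ∀ v, ‖Ψ v‖ ≤ 1) (ε B : ℝ) (hε : 0 < ε) (hB : 0 < B)
    (hcard : (mhat : ℝ) * B ^ 2 ≤ ε ^ 2 * (Nat.choose d r : ℝ)) :
    ∃ u : Finset (Fin d), u.card = r ∧
      ∀ a : EuclideanSpace ℝ (Fin mhat), ‖a‖ ≤ B →
        1 - ε ≤ (1 / 2 ^ d : ℝ) *
          ∑ v : Fin d → Bool, max (1 - parity u v * ⟪a, Ψ v⟫) 0 := by
  classical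
  set N : ℝ := (2 : ℝ) ^ d with hN
  have hNpos : (0 : ℝ) < N := by positivity
  set p : Finset (Fin d) → EuclideanSpace ℝ (Fin d → Bool) :=
    fun u => (Real.sqrt N)⁻¹ • WithLp.toLp 2 (fun v => parity u v : (Fin d → Bool) → ℝ) with hp
  have hinner : ∀ x y : EuclideanSpace ℝ (Fin d → Bool), ⟪x, y⟫ = ∑ v : Fin d → Bool, x v * y v := by
    intro x y
    rw [PiLp.inner_apply]
    simp [RCLike.inner_apply, mul_comm]
  have hsqrtN : (Real.sqrt N)⁻¹ * (Real.sqrt N)⁻¹ = N⁻¹ := by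
    rw [← mul_inv, Real.mul_self_sqrt hNpos.le]
  have hortho : Orthonormal ℝ p := by
    rw [orthonormal_iff_ite]
    intro u w
    rw [hp]
    simp only [inner_smul_left, inner_smul_right, RCLike.conj_to_real]
    rw [hinner]
    simp only [WithLp.ofLp_toLp]
    have : ∑ v : Fin d → Bool, parity u v * parity w v
        = if u = w then N else 0 := by
      have : ∀ v, parity u v * parity w v = parity (symmDiff u w) v :=
        fun v => parity_mul u w v
      simp only [this, sum_parity, symmDiff_eq_bot, Finset.bot_eq_empty, hN]
      rcases eq_or_ne u w with h | h <;> simp [h, sub_eq_zero]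
    rw [this, ← mul_assoc, hsqrtN]
    rcases eq_or_ne u w with h | h <;> simp [h, hNpos.ne']
  -- coordinates of the correlation vector
  set c : Finset (Fin d) → Fin mhat → ℝ :=
    fun u j => N⁻¹ * ∑ v : Fin d → Bool, parity u v * Ψ v j with hc
  set S : Finset (Finset (Fin d)) := Finset.powersetCard r Finset.univ with hS
  have hScard : (S.card : ℝ) = (Nat.choose d r : ℝ) := by
    rw [hS, Finset.card_powersetCard, Finset.card_univ, Fintype.card_fin]
  have hSpos : 0 < S.card := by
    rw [hS, Finset.card_powersetCard, Finset.card_univ, Fintype.card_fin]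
    exact Nat.choose_pos hr
  have habs : ∀ (v : Fin d → Bool) (j : Fin mhat), (Ψ v j) ^ 2 ≤ 1 := by
    intro v j
    have h1 : (Ψ v j) ^ 2 ≤ ∑ k : Fin mhat, (Ψ v k) ^ 2 := by
      exact Finset.single_le_sum (f := fun k => (Ψ v k) ^ 2) (fun k _ => sq_nonneg _)
        (Finset.mem_univ j)
    have h2 : ∑ k : Fin mhat, (Ψ v k) ^ 2 = ‖Ψ v‖ ^ 2 := by
      rw [EuclideanSpace.norm_eq, Real.sq_sqrt (by positivity)]
      simp [sq_abs]
    have h3 : ‖Ψ v‖ ^ 2 ≤ 1 := by nlinarith [hΨ v, norm_nonneg (Ψ v)]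
    linarith
  have hBessel : ∀ j : Fin mhat, ∑ u ∈ S, (c u j) ^ 2 ≤ 1 := by
    intro j
    set x : EuclideanSpace ℝ (Fin d → Bool) :=
      (Real.sqrt N)⁻¹ • WithLp.toLp 2 (fun v => Ψ v j : (Fin d → Bool) → ℝ) with hx
    have hin : ∀ u, ⟪p u, x⟫ = c u j := by
      intro u
      rw [hp, hx]
      simp only [inner_smul_left, inner_smul_right, RCLike.conj_to_real]
      rw [hinner, ← mul_assoc, hsqrtN, hc]
    have hxnorm : ‖x‖ ^ 2 ≤ 1 := by
      have : ‖x‖ ^ 2 = ⟪x, x⟫ := (real_inner_self_eq_norm_sq x).symm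
      rw [this, hx]
      simp only [inner_smul_left, inner_smul_right, RCLike.conj_to_real]
      rw [hinner, ← mul_assoc, hsqrtN]
      have hsum : ∑ v : Fin d → Bool, Ψ v j * Ψ v j ≤ N := by
        calc ∑ v : Fin d → Bool, Ψ v j * Ψ v j ≤ ∑ _v : Fin d → Bool, (1:ℝ) := by
              apply Finset.sum_le_sum
              intro v _
              have := habs v j
              nlinarith
          _ = N := by simp [hN, Finset.card_univ]
      calc N⁻¹ * ∑ v : Fin d → Bool, Ψ v j * Ψ v j ≤ N⁻¹ * N := by
            apply mul_le_mul_of_nonneg_left hsum (by positivity)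
        _ = 1 := inv_mul_cancel₀ hNpos.ne'
    have := hortho.sum_inner_products_le (s := S) x
    calc ∑ u ∈ S, (c u j) ^ 2 = ∑ u ∈ S, ‖⟪p u, x⟫‖ ^ 2 := by
          apply Finset.sum_congr rfl
          intro u _
          rw [hin u, Real.norm_eq_abs, sq_abs]
      _ ≤ ‖x‖ ^ 2 := this
      _ ≤ 1 := hxnorm
  have htotal : ∑ u ∈ S, ∑ j : Fin mhat, (c u j) ^ 2 ≤ (mhat : ℝ) := by
    rw [Finset.sum_comm]
    calc ∑ j : Fin mhat, ∑ u ∈ S, (c u j) ^ 2 ≤ ∑ _j : Fin mhat, (1:ℝ) :=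
          Finset.sum_le_sum (fun j _ => hBessel j)
      _ = (mhat : ℝ) := by simp
  -- choose a good u
  have hexists : ∃ u ∈ S, ∑ j : Fin mhat, (c u j) ^ 2 ≤ (mhat : ℝ) / S.card := by
    by_contra h
    push_neg at h
    have : ∑ u ∈ S, ((mhat : ℝ) / S.card) < ∑ u ∈ S, ∑ j : Fin mhat, (c u j) ^ 2 :=
      Finset.sum_lt_sum_of_nonempty (Finset.card_pos.mp hSpos) (fun u hu => h u hu)
    rw [Finset.sum_const, nsmul_eq_mul, mul_div_cancel₀] at this
    · linarith
    · exact_mod_cast hSpos.ne'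
  obtain ⟨u, huS, hu⟩ := hexists
  refine ⟨u, (Finset.mem_powersetCard.mp huS).2, ?_⟩
  intro a ha
  -- the correlation vector
  set cu : EuclideanSpace ℝ (Fin mhat) := WithLp.toLp 2 (fun j => c u j : Fin mhat → ℝ) with hcu
  have hcunorm : ‖cu‖ ≤ ε / B := by
    have h1 : ‖cu‖ ^ 2 = ∑ j : Fin mhat, (c u j) ^ 2 := by
      rw [EuclideanSpace.norm_eq, Real.sq_sqrt (by positivity)]
      simp [sq_abs, hcu]
    have h2 : (mhat : ℝ) / S.card ≤ (ε / B) ^ 2 := by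
      rw [div_le_iff₀ (by exact_mod_cast hSpos), div_pow, div_mul_eq_mul_div,
        le_div_iff₀ (by positivity), hScard]
      nlinarith
    have h3 : ‖cu‖ ^ 2 ≤ (ε / B) ^ 2 := by rw [h1]; linarith
    have h4 : 0 ≤ ε / B := by positivity
    nlinarith [norm_nonneg cu]
  have hinnercu : ⟪a, cu⟫ = N⁻¹ * ∑ v : Fin d → Bool, parity u v * ⟪a, Ψ v⟫ := by
    have hinner2 : ∀ x y : EuclideanSpace ℝ (Fin mhat), ⟪x, y⟫ = ∑ j : Fin mhat, x j * y j := by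
      intro x y
      rw [PiLp.inner_apply]
      simp [RCLike.inner_apply, mul_comm]
    rw [hinner2 a cu]
    have : ∀ v : Fin d → Bool, ⟪a, Ψ v⟫ = ∑ j : Fin mhat, a j * Ψ v j :=
      fun v => hinner2 a (Ψ v)
    simp only [this, hcu, hc, WithLp.ofLp_toLp, Finset.mul_sum, Finset.sum_mul]
    rw [Finset.sum_comm]
    apply Finset.sum_congr rfl
    intro v _
    apply Finset.sum_congr rfl
    intro j _
    ring
  have hcs : ⟪a, cu⟫ ≤ ε := by
    calc ⟪a, cu⟫ ≤ ‖a‖ * ‖cu‖ := real_inner_le_norm a cu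
      _ ≤ B * (ε / B) := by
          apply mul_le_mul ha hcunorm (norm_nonneg _) hB.le
      _ = ε := by field_simp
  -- final bound
  have hlow : (1 : ℝ) - ⟪a, cu⟫ ≤ (1 / 2 ^ d : ℝ) *
      ∑ v : Fin d → Bool, max (1 - parity u v * ⟪a, Ψ v⟫) 0 := by
    have hstep : ∑ v : Fin d → Bool, (1 - parity u v * ⟪a, Ψ v⟫) ≤
        ∑ v : Fin d → Bool, max (1 - parity u v * ⟪a, Ψ v⟫) 0 :=
      Finset.sum_le_sum (fun v _ => le_max_left _ _)
    have hsplit : ∑ v : Fin d → Bool, (1 - parity u v * ⟪a, Ψ v⟫)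
        = N - ∑ v : Fin d → Bool, parity u v * ⟪a, Ψ v⟫ := by
      rw [Finset.sum_sub_distrib]
      congr 1
      simp [hN, Finset.card_univ]
    have hone : (1 / 2 ^ d : ℝ) = N⁻¹ := by rw [hN]; ring
    rw [hone, hinnercu]
    calc (1 : ℝ) - N⁻¹ * ∑ v : Fin d → Bool, parity u v * ⟪a, Ψ v⟫
        = N⁻¹ * (N - ∑ v : Fin d → Bool, parity u v * ⟪a, Ψ v⟫) := by
          field_simp
      _ = N⁻¹ * ∑ v : Fin d → Bool, (1 - parity u v * ⟪a, Ψ v⟫) := by rw [hsplit]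
      _ ≤ N⁻¹ * ∑ v : Fin d → Bool, max (1 - parity u v * ⟪a, Ψ v⟫) 0 := by
          apply mul_le_mul_of_nonneg_left hstep (by positivity)
  linarith
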